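/- Suppose q ≤ m < n and γ < 0 (with λ of arbitrary sign). Then the zero solution is stable: for every ε ∈ (0,d0] there exist δ > 0 and t1 ≥ t0 such that every admissible solution with v(t1) ≤ δ satisfies 0 ≤ v(t) ≤ ε for all t ≥ t1. -/

import Mathlib

/-- An admissible solution of the reduced equation
`v'(t) = γ·t^{−m/q}·v(t)^s + λ·t^{−n/q}·v(t) + ρ(t)` on `[t0,∞)` with values in
`[0,d0]`, where `|ρ(t)| ≤ M·(t^{−m/q}·v(t)^s + t^{−n/q}·v(t))·(v(t) + t^{−1/q})`. -/
def IsAdmissible (q m n s : ℕ) (γ lam d0 t0 M : ℝ) (v : ℝ → ℝ) : Prop :=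
  (∀ t ≥ t0, v t ∈ Set.Icc (0:ℝ) d0) ∧
  ∃ ρ : ℝ → ℝ,
    (∀ t ≥ t0, |ρ t| ≤
      M * (t ^ (-(m:ℝ)/(q:ℝ)) * v t ^ s + t ^ (-(n:ℝ)/(q:ℝ)) * v t)
        * (v t + t ^ (-(1:ℝ)/(q:ℝ)))) ∧
    (∀ t ≥ t0, HasDerivAt v
      (γ * t ^ (-(m:ℝ)/(q:ℝ)) * v t ^ s + lam * t ^ (-(n:ℝ)/(q:ℝ)) * v t + ρ t) t)

/-- if `q ≤ m < n` and `γ < 0` (with `λ` of arbitrary sign) the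
zero solution is stable. -/
theorem stability_q_le_m_lt_n
    (q m n s : ℕ) (hq : 0 < q) (hm : 0 < m) (hqm : q ≤ m) (hmn : m < n) (hs : 2 ≤ s)
    (γ lam d0 t0 M : ℝ) (hγ : γ < 0) (hlam : lam ≠ 0)
    (hd0 : 0 < d0) (ht0 : 0 < t0) (hM : 0 < M) :
    ∀ ε ∈ Set.Ioc (0:ℝ) d0, ∃ δ > 0, ∃ t1 ≥ t0,
      ∀ v : ℝ → ℝ, IsAdmissible q m n s γ lam d0 t0 M v → v t1 ≤ δ →
        ∀ t ≥ t1, 0 ≤ v t ∧ v t ≤ ε := by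
  intro ε hε
  obtain ⟨hε0, hεd0⟩ := hε
  set G : ℝ := -γ with hGdef
  have hG0 : 0 < G := by simp [hGdef]; linarith
  set b : ℝ := min ε (min (G/(8*M)) 1) with hbdef
  have hb0 : 0 < b := lt_min hε0 (lt_min (by positivity) one_pos)
  set a : ℝ := b/2 with hadef
  have ha0 : 0 < a := by positivity
  have hab : a < b := by rw [hadef]; linarith
  have hbε : b ≤ ε := min_le_left _ _
  have hbG : b ≤ G/(8*M) := le_trans (min_le_right _ _) (min_le_left _ _)
  have hb1 : b ≤ 1 := le_trans (min_le_right _ _) (min_le_right _ _)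
  have hc0 : (0:ℝ) < G * a^(s-1) := by positivity
  have hD0 : (0:ℝ) < |lam| + M*(b+1) := by positivity
  set η : ℝ := min (G/(8*M)) ((G * a^(s-1))/(4*(|lam| + M*(b+1)))) with hηdef
  have hη0 : 0 < η := lt_min (by positivity) (by positivity)
  -- generic bound:  r ≤ |lam| + M(b+1)  ⇒  r·η ≤ G a^{s-1}/4
  have hgen : ∀ r : ℝ, 0 ≤ r → r ≤ |lam| + M*(b+1) → r * η ≤ G * a^(s-1)/4 := by
    intro r hr hrD
    have h1 : η ≤ (G * a^(s-1))/(4*(|lam| + M*(b+1))) := min_le_right _ _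
    calc r * η ≤ (|lam| + M*(b+1)) * ((G * a^(s-1))/(4*(|lam| + M*(b+1)))) :=
          mul_le_mul hrD h1 hη0.le hD0.le
      _ = G * a^(s-1)/4 := by field_simp
  have hMη : M * η ≤ G/8 := by
    have h1 : η ≤ G/(8*M) := min_le_left _ _
    calc M * η ≤ M * (G/(8*M)) := mul_le_mul_of_nonneg_left h1 hM.le
      _ = G/8 := by field_simp
  have hMb : M * b ≤ G/8 := by
    calc M * b ≤ M * (G/(8*M)) := mul_le_mul_of_nonneg_left hbG hM.le
      _ = G/8 := by field_simp
  -- choose t1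
  have htend : Filter.Tendsto (fun t : ℝ => t ^ (-(1:ℝ)/(q:ℝ))) Filter.atTop (nhds 0) := by
    have hpos : (0:ℝ) < 1/(q:ℝ) := by positivity
    simpa [neg_div] using tendsto_rpow_neg_atTop hpos
  have hev : ∀ᶠ t in Filter.atTop, (t:ℝ) ^ (-(1:ℝ)/(q:ℝ)) ≤ η :=
    (htend.eventually (gt_mem_nhds hη0)).mono fun x hx => hx.le
  obtain ⟨t1, ht1⟩ := Filter.eventually_atTop.mp
    (hev.and ((Filter.eventually_ge_atTop t0).and (Filter.eventually_ge_atTop 1)))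
  have ht1t0 : t0 ≤ t1 := (ht1 t1 le_rfl).2.1
  have ht11 : (1:ℝ) ≤ t1 := (ht1 t1 le_rfl).2.2
  refine ⟨a, ha0, t1, ht1t0, ?_⟩
  intro v hv hva1 t ht
  obtain ⟨hrange, ρ, hρ, hderiv⟩ := hv
  have ht0t : t0 ≤ t := le_trans ht1t0 ht
  refine ⟨(hrange t ht0t).1, ?_⟩
  -- the key derivative estimate
  have key : ∀ x, t1 ≤ x → a ≤ v x → v x ≤ b → deriv v x ≤ 0 := by
    intro x hx hau hub
    have hx0 : t0 ≤ x := le_trans ht1t0 hx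
    have hx1 : (1:ℝ) ≤ x := le_trans ht11 hx
    have hxpos : (0:ℝ) < x := lt_of_lt_of_le one_pos hx1
    set X : ℝ := x ^ (-(m:ℝ)/(q:ℝ)) with hXdef
    set Y : ℝ := x ^ (-(n:ℝ)/(q:ℝ)) with hYdef
    set Z : ℝ := x ^ (-(1:ℝ)/(q:ℝ)) with hZdef
    have hX : 0 < X := Real.rpow_pos_of_pos hxpos _
    have hY : 0 < Y := Real.rpow_pos_of_pos hxpos _
    have hZ : 0 < Z := Real.rpow_pos_of_pos hxpos _
    have hZη : Z ≤ η := (ht1 x hx).1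
    have hZ1 : Z ≤ 1 := Real.rpow_le_one_of_one_le_of_nonpos hx1 (by
      have : (0:ℝ) < (q:ℝ) := by positivity
      rw [div_nonpos_iff]; right; constructor <;> [norm_num; linarith])
    have hqR : (0:ℝ) < (q:ℝ) := by positivity
    have hYXZ : Y ≤ X * Z := by
      have hsum : (-(m:ℝ)/(q:ℝ)) + (((m:ℝ)-(n:ℝ))/(q:ℝ)) = -(n:ℝ)/(q:ℝ) := by ring
      have h1 : Y = X * x ^ (((m:ℝ)-(n:ℝ))/(q:ℝ)) := by
        rw [hYdef, hXdef, ← Real.rpow_add hxpos, hsum]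
      have h2 : x ^ (((m:ℝ)-(n:ℝ))/(q:ℝ)) ≤ Z := by
        rw [hZdef]
        apply Real.rpow_le_rpow_of_exponent_le hx1
        have hmn' : (m:ℝ) - (n:ℝ) ≤ -1 := by
          have : (m:ℝ) + 1 ≤ (n:ℝ) := by exact_mod_cast hmn
          linarith
        have := div_le_div_of_nonneg_right hmn' hqR.le
        simpa [neg_div] using this
      rw [h1]
      exact mul_le_mul_of_nonneg_left h2 (le_of_lt hX)
    set u : ℝ := v x with hudef
    have hu0 : 0 ≤ u := le_trans ha0.le hau
    have hus : a^(s-1) * u ≤ u^s := by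
      have h1 : a^(s-1) ≤ u^(s-1) := pow_le_pow_left₀ ha0.le hau _
      have h2 : u^s = u^(s-1) * u := by
        rw [← pow_succ]; congr 1; omega
      rw [h2]
      exact mul_le_mul_of_nonneg_right h1 hu0
    have hXu : 0 ≤ X * u := mul_nonneg hX.le hu0
    have hXus : 0 ≤ X * u^s := mul_nonneg hX.le (pow_nonneg hu0 s)
    -- |lam| term
    have hYXη : Y ≤ X * η := le_trans hYXZ (mul_le_mul_of_nonneg_left hZη hX.le)
    have hYuXηu : Y * u ≤ X * η * u := mul_le_mul_of_nonneg_right hYXη hu0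
    have hlamterm : lam * Y * u ≤ (G * a^(s-1)/4) * (X * u) := by
      have h1 : lam * (Y * u) ≤ |lam| * (Y * u) :=
        mul_le_mul_of_nonneg_right (le_abs_self lam) (mul_nonneg hY.le hu0)
      have h2 : |lam| * (Y * u) ≤ |lam| * (X * η * u) :=
        mul_le_mul_of_nonneg_left hYuXηu (abs_nonneg lam)
      have h3 : |lam| * η ≤ G * a^(s-1)/4 :=
        hgen _ (abs_nonneg lam) (by linarith [mul_nonneg hM.le (by linarith : (0:ℝ) ≤ b+1)])
      linarith [h1, h2, mul_le_mul_of_nonneg_right h3 hXu]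
    -- remainder term
    have hρx : ρ x ≤ M * (X * u^s + Y * u) * (u + Z) := by
      have h0 := le_trans (le_abs_self _) (hρ x hx0)
      rw [← hXdef, ← hYdef, ← hZdef, ← hudef] at h0
      exact h0
    have hrem : M * (X * u^s + Y * u) * (u + Z)
        ≤ (G/4) * (X * u^s) + (G * a^(s-1)/4) * (X * u) := by
      have hA : M * (X * u^s) * (u + Z) ≤ (G/4) * (X * u^s) := by
        have h1 : M * (u + Z) ≤ G/4 := by
          have h2 : M * u ≤ M * b := mul_le_mul_of_nonneg_left hub hM.le
          have h3 : M * Z ≤ M * η := mul_le_mul_of_nonneg_left hZη hM.le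
          linarith
        linarith [mul_le_mul_of_nonneg_right h1 hXus]
      have hB : M * (Y * u) * (u + Z) ≤ (G * a^(s-1)/4) * (X * u) := by
        have huZ0 : 0 ≤ u + Z := by linarith
        have h1 : M * (Y * u) * (u + Z) ≤ M * (X * η * u) * (u + Z) :=
          mul_le_mul_of_nonneg_right (mul_le_mul_of_nonneg_left hYuXηu hM.le) huZ0
        have h2 : M * (X * η * u) * (u + Z) ≤ M * (X * η * u) * (b + 1) := by
          have : u + Z ≤ b + 1 := by linarith
          exact mul_le_mul_of_nonneg_left this (by positivity)
        have h3 : M * (b+1) * η ≤ G * a^(s-1)/4 :=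
          hgen _ (by positivity) (by linarith [abs_nonneg lam])
        linarith [h1, h2, mul_le_mul_of_nonneg_right h3 hXu]
      linarith [hA, hB]
    -- combine
    have hdx := (hderiv x hx0).deriv
    rw [hdx, ← hXdef, ← hYdef, ← hudef]
    have hγG : γ = -G := by rw [hGdef]; ring
    have hm3 : (3*G/4) * (X * (a^(s-1) * u)) ≤ (3*G/4) * (X * u^s) :=
      mul_le_mul_of_nonneg_left (mul_le_mul_of_nonneg_left hus hX.le) (by positivity)
    rw [hγG]
    have hnn : 0 ≤ G * a^(s-1) * (X * u) :=
      mul_nonneg (mul_nonneg hG0.le (pow_nonneg ha0.le (s-1))) hXu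
    clear_value G b a η X Y Z u
    linarith [hlamterm, hρx, hrem, hm3, hnn]
  -- crossing argument: v stays ≤ a
  have main : ∀ T, t1 ≤ T → v T ≤ a := by
    intro T hT
    by_contra hcon
    push_neg at hcon
    have hcont : ContinuousOn v (Set.Icc t1 T) := fun x hx =>
      ((hderiv x (le_trans ht1t0 hx.1)).continuousAt).continuousWithinAt
    set S : Set ℝ := {x ∈ Set.Icc t1 T | v x ≤ a} with hSdef
    have hScl : IsClosed S := by
      have : S = Set.Icc t1 T ∩ v ⁻¹' Set.Iic a := by
        ext x; simp [hSdef, Set.mem_sep_iff, and_comm]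
      rw [this]
      exact hcont.preimage_isClosed_of_isClosed isClosed_Icc isClosed_Iic
    have hScomp : IsCompact S :=
      isCompact_Icc.of_isClosed_subset hScl (fun x hx => hx.1)
    have hSne : S.Nonempty := ⟨t1, ⟨le_rfl, hT⟩, hva1⟩
    set τ : ℝ := sSup S with hτdef
    have hτS : τ ∈ S := hScomp.sSup_mem hSne
    have hτI : τ ∈ Set.Icc t1 T := hτS.1
    have hvτ : v τ ≤ a := hτS.2
    have hgt : ∀ x, τ < x → x ≤ T → a < v x := by
      intro x h1 h2
      by_contra h3
      push_neg at h3
      have hxS : x ∈ S := ⟨⟨le_trans hτI.1 h1.le, h2⟩, h3⟩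
      exact absurd (le_csSup hScomp.bddAbove hxS) (not_le.mpr h1)
    have hcont' : ContinuousOn v (Set.Icc τ T) :=
      hcont.mono (Set.Icc_subset_Icc hτI.1 le_rfl)
    set S2 : Set ℝ := {x ∈ Set.Icc τ T | b ≤ v x} with hS2def
    have hS2cl : IsClosed S2 := by
      have : S2 = Set.Icc τ T ∩ v ⁻¹' Set.Ici b := by
        ext x; simp [hS2def, Set.mem_sep_iff, and_comm]
      rw [this]
      exact hcont'.preimage_isClosed_of_isClosed isClosed_Icc isClosed_Ici
    have hS2comp : IsCompact S2 :=
      isCompact_Icc.of_isClosed_subset hS2cl (fun x hx => hx.1)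
    by_cases hS2ne : S2.Nonempty
    · set σ : ℝ := sInf S2 with hσdef
      have hσS2 : σ ∈ S2 := hS2comp.sInf_mem hS2ne
      have hσI : σ ∈ Set.Icc τ T := hσS2.1
      have hvσ : b ≤ v σ := hσS2.2
      have hτσ : τ < σ := by
        rcases lt_or_eq_of_le hσI.1 with h | h
        · exact h
        · exfalso; rw [← h] at hvσ; linarith
      have hband : ∀ x ∈ Set.Ioo τ σ, a ≤ v x ∧ v x ≤ b := by
        intro x hx
        refine ⟨(hgt x hx.1 (le_trans hx.2.le hσI.2)).le, ?_⟩
        by_contra h3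
        push_neg at h3
        have hxS2 : x ∈ S2 := ⟨⟨hx.1.le, le_trans hx.2.le hσI.2⟩, h3.le⟩
        exact absurd (csInf_le hS2comp.bddBelow hxS2) (not_le.mpr hx.2)
      have hanti : AntitoneOn v (Set.Icc τ σ) := by
        apply antitoneOn_of_deriv_nonpos (convex_Icc _ _)
          (hcont'.mono (Set.Icc_subset_Icc le_rfl hσI.2))
        · intro x hx
          rw [interior_Icc] at hx
          exact ((hderiv x (le_trans ht1t0 (le_trans hτI.1 hx.1.le))).differentiableAt).differentiableWithinAt
        · intro x hx
          rw [interior_Icc] at hx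
          obtain ⟨h1, h2⟩ := hband x hx
          exact key x (le_trans hτI.1 hx.1.le) h1 h2
      have := hanti (Set.left_mem_Icc.mpr hσI.1) (Set.right_mem_Icc.mpr hσI.1) hσI.1
      linarith
    · have hband : ∀ x ∈ Set.Ioo τ T, a ≤ v x ∧ v x ≤ b := by
        intro x hx
        refine ⟨(hgt x hx.1 hx.2.le).le, ?_⟩
        by_contra h3
        push_neg at h3
        exact hS2ne ⟨x, ⟨hx.1.le, hx.2.le⟩, h3.le⟩
      have hanti : AntitoneOn v (Set.Icc τ T) := by
        apply antitoneOn_of_deriv_nonpos (convex_Icc _ _) hcont'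
        · intro x hx
          rw [interior_Icc] at hx
          exact ((hderiv x (le_trans ht1t0 (le_trans hτI.1 hx.1.le))).differentiableAt).differentiableWithinAt
        · intro x hx
          rw [interior_Icc] at hx
          obtain ⟨h1, h2⟩ := hband x hx
          exact key x (le_trans hτI.1 hx.1.le) h1 h2
      have := hanti (Set.left_mem_Icc.mpr hτI.2) (Set.right_mem_Icc.mpr hτI.2) hτI.2
      linarith
  have := main t ht
  linarith
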